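/- Clairaut identity a.e. step: with g as above (mixed Lions derivatives exist, bounded, Lipschitz), for each x ∈ ℝ and ξ ∈ L²(F;ℝ), computing the double increment I = g(x+z, P_{ξ+η}) − g(x+z, P_ξ) − g(x, P_{ξ+η}) + g(x, P_ξ) in two ways yields E[∂_x(∂_μ g)(x, P_ξ, ξ) η]·z = E[∂_μ(∂_x g)(x, P_ξ)(ξ) η]·z + R with |R| ≤ 4C|z|²E[η²], for all z ∈ ℝ, η ∈ L²(F;ℝ), where C is the common Lipschitz constant of the mixed derivatives; consequently ∂_x(∂_μ g)(x, P_ξ, y) = ∂_μ(∂_x g)(x, P_ξ)(y) for P_ξ-a.e. y. -/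

import Mathlib

open MeasureTheory ProbabilityTheory

noncomputable section

/-- The 2-Wasserstein distance between two probability measures on `ℝ`. -/
def W2 (μ ν : Measure ℝ) : ℝ :=
  sInf { c : ℝ | ∃ ρ : Measure (ℝ × ℝ), IsProbabilityMeasure ρ ∧
    ρ.map Prod.fst = μ ∧ ρ.map Prod.snd = ν ∧
    c = (∫ p, (p.1 - p.2) ^ 2 ∂ρ) ^ (1 / 2 : ℝ) }

variable {Ω : Type*} [MeasurableSpace Ω]

/-- `Df` is the Lions derivative of `f : P₂(ℝ) → ℝ`: for every `ϑ ∈ L²`, the lifted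
map `θ ↦ f(P_θ)` on `L²(Ω;ℝ)` is Fréchet differentiable at `ϑ`, with derivative
`η ↦ E[Df(P_ϑ, ϑ)·η]`. -/
def LionsDeriv1 (P : Measure Ω) (f : Measure ℝ → ℝ) (Df : Measure ℝ → ℝ → ℝ) : Prop :=
  ∀ ϑ : Ω → ℝ, Measurable ϑ → MemLp ϑ 2 P →
    ∀ ε > (0 : ℝ), ∃ δ > (0 : ℝ), ∀ η : Ω → ℝ, Measurable η → MemLp η 2 P →
      (∫ ω, (η ω) ^ 2 ∂P) ^ (1 / 2 : ℝ) ≤ δ →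
      |f (P.map (fun ω => ϑ ω + η ω)) - f (P.map ϑ)
          - ∫ ω, Df (P.map ϑ) (ϑ ω) * η ω ∂P|
        ≤ ε * (∫ ω, (η ω) ^ 2 ∂P) ^ (1 / 2 : ℝ)

lemma aux_sqrt_sq (a : ℝ) : ((a^2 : ℝ))^((1:ℝ)/2) = |a| := by
  rw [← sq_abs, ← Real.rpow_natCast |a| 2, ← Real.rpow_mul (abs_nonneg a)]
  norm_num

lemma aux_rpow_mono {a b : ℝ} (ha : 0 ≤ a) (h : a ≤ b) :
    a ^ ((1:ℝ)/2) ≤ b ^ ((1:ℝ)/2) :=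
  Real.rpow_le_rpow ha h (by norm_num)

lemma W2_map_le (P : Measure Ω) [IsProbabilityMeasure P] {f₁ f₂ : Ω → ℝ}
    (h₁ : Measurable f₁) (h₂ : Measurable f₂) :
    W2 (P.map f₁) (P.map f₂) ≤ (∫ ω, (f₁ ω - f₂ ω)^2 ∂P) ^ ((1:ℝ)/2) := by
  have hbdd : BddBelow { c : ℝ | ∃ ρ : Measure (ℝ × ℝ), IsProbabilityMeasure ρ ∧
      ρ.map Prod.fst = P.map f₁ ∧ ρ.map Prod.snd = P.map f₂ ∧
      c = (∫ p, (p.1 - p.2) ^ 2 ∂ρ) ^ (1 / 2 : ℝ) } := by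
    refine ⟨0, ?_⟩
    rintro c ⟨ρ, hρ, h1, h2, rfl⟩
    exact Real.rpow_nonneg (integral_nonneg fun p => sq_nonneg _) _
  have hpair : Measurable (fun ω => (f₁ ω, f₂ ω)) := h₁.prodMk h₂
  have hmem : (∫ ω, (f₁ ω - f₂ ω)^2 ∂P) ^ ((1:ℝ)/2) ∈ { c : ℝ | ∃ ρ : Measure (ℝ × ℝ), IsProbabilityMeasure ρ ∧
      ρ.map Prod.fst = P.map f₁ ∧ ρ.map Prod.snd = P.map f₂ ∧
      c = (∫ p, (p.1 - p.2) ^ 2 ∂ρ) ^ (1 / 2 : ℝ) } := by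
    refine ⟨P.map (fun ω => (f₁ ω, f₂ ω)), Measure.isProbabilityMeasure_map hpair.aemeasurable, ?_, ?_, ?_⟩
    · rw [Measure.map_map measurable_fst hpair]; rfl
    · rw [Measure.map_map measurable_snd hpair]; rfl
    · rw [integral_map (f := fun p : ℝ × ℝ => (p.1 - p.2)^2) hpair.aemeasurable
        ((by fun_prop : Continuous fun p : ℝ × ℝ => (p.1 - p.2)^2).aestronglyMeasurable)]
  exact csInf_le hbdd hmem

lemma mvt_bound {h h' : ℝ → ℝ} {K M t : ℝ} (ht : 0 ≤ t)
    (hd : ∀ τ ∈ Set.Icc (0:ℝ) t, HasDerivAt h (h' τ) τ)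
    (hb : ∀ τ ∈ Set.Icc (0:ℝ) t, |h' τ - K| ≤ M) :
    |h t - h 0 - t * K| ≤ M * t := by
  have key : ∀ τ ∈ Set.Icc (0:ℝ) t, HasDerivWithinAt (fun σ => h σ - σ * K)
      (h' τ - K) (Set.Icc 0 t) τ := by
    intro τ hτ
    have := ((hd τ hτ).sub ((hasDerivAt_id τ).mul_const K)).hasDerivWithinAt (s := Set.Icc 0 t)
    simpa only [id, one_mul, Pi.sub_def] using this
  have hM : ∀ τ ∈ Set.Icc (0:ℝ) t, ‖h' τ - K‖ ≤ M := fun τ hτ => hb τ hτ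
  have := Convex.norm_image_sub_le_of_norm_hasDerivWithin_le key hM (convex_Icc 0 t)
    (Set.left_mem_Icc.2 ht) (Set.right_mem_Icc.2 ht)
  rw [Real.norm_eq_abs, Real.norm_eq_abs] at this
  calc |h t - h 0 - t * K| = |(h t - t * K) - (h 0 - 0 * K)| := by ring_nf
    _ ≤ M * |t - 0| := this
    _ = M * t := by rw [sub_zero, abs_of_nonneg ht]

lemma scaled_norm (P : Measure Ω) [IsProbabilityMeasure P] (η : Ω → ℝ) (c : ℝ) :
    (∫ ω, ((c * η ω)) ^ 2 ∂P) ^ ((1:ℝ)/2)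
      = |c| * (∫ ω, (η ω) ^ 2 ∂P) ^ ((1:ℝ)/2) := by
  have : (fun ω => (c * η ω)^2) = fun ω => c^2 * (η ω)^2 := by funext ω; ring
  rw [this, integral_const_mul,
    Real.mul_rpow (sq_nonneg c) (integral_nonneg fun ω => sq_nonneg _), aux_sqrt_sq]

lemma lions_hasDerivAt {P : Measure Ω} [IsProbabilityMeasure P]
    {f : Measure ℝ → ℝ} {Df : Measure ℝ → ℝ → ℝ} (hf : LionsDeriv1 P f Df)
    {ϑ η : Ω → ℝ} (hϑm : Measurable ϑ) (hϑ : MemLp ϑ 2 P)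
    (hηm : Measurable η) (hη : MemLp η 2 P) (τ₀ : ℝ) :
    HasDerivAt (fun τ => f (P.map (fun ω => ϑ ω + τ * η ω)))
      (∫ ω, Df (P.map (fun ω => ϑ ω + τ₀ * η ω)) (ϑ ω + τ₀ * η ω) * η ω ∂P) τ₀ := by
  set b : Ω → ℝ := fun ω => ϑ ω + τ₀ * η ω with hb
  set N : ℝ := (∫ ω, (η ω) ^ 2 ∂P) ^ ((1:ℝ)/2) with hN
  have hNnn : 0 ≤ N := Real.rpow_nonneg (integral_nonneg fun ω => sq_nonneg _) _
  have hbm : Measurable b := hϑm.add (hηm.const_mul τ₀)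
  have hbℒ : MemLp b 2 P := hϑ.add (hη.const_mul τ₀)
  rw [hasDerivAt_iff_isLittleO, Asymptotics.isLittleO_iff]
  intro c hc
  obtain ⟨δ, hδ, H⟩ := hf b hbm hbℒ (c / (N + 1)) (by positivity)
  have hev : ∀ᶠ τ in nhds τ₀, |τ - τ₀| < δ / (N + 1) := by
    have := Metric.ball_mem_nhds τ₀ (by positivity : (0:ℝ) < δ / (N + 1))
    filter_upwards [this] with τ hτ
    simpa [Real.dist_eq] using hτ
  filter_upwards [hev] with τ hτ
  set η' : Ω → ℝ := fun ω => (τ - τ₀) * η ω with hη'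
  have hnorm : (∫ ω, (η' ω) ^ 2 ∂P) ^ ((1:ℝ)/2) = |τ - τ₀| * N := scaled_norm P η (τ - τ₀)
  have hle : (∫ ω, (η' ω) ^ 2 ∂P) ^ ((1:ℝ)/2) ≤ δ := by
    rw [hnorm]
    calc |τ - τ₀| * N ≤ (δ / (N+1)) * N := by
          apply mul_le_mul_of_nonneg_right (le_of_lt hτ) hNnn
      _ ≤ δ := by rw [div_mul_eq_mul_div]; rw [div_le_iff₀ (by positivity)]; nlinarith
  have key := H η' (hηm.const_mul _) (hη.const_mul _) (by simpa using hle)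
  have harg : (fun ω => b ω + η' ω) = fun ω => ϑ ω + τ * η ω := by
    funext ω; simp only [hb, hη']; ring
  have hint : (∫ ω, Df (P.map b) (b ω) * η' ω ∂P)
      = (τ - τ₀) * ∫ ω, Df (P.map b) (b ω) * η ω ∂P := by
    rw [← integral_const_mul]
    congr 1; funext ω; simp only [hη']; ring
  rw [harg, hint, hnorm] at key
  rw [Real.norm_eq_abs, Real.norm_eq_abs, smul_eq_mul]
  calc |f (P.map fun ω => ϑ ω + τ * η ω) - f (P.map fun ω => ϑ ω + τ₀ * η ω)
        - (τ - τ₀) * ∫ ω, Df (P.map b) (b ω) * η ω ∂P|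
      ≤ (c / (N+1)) * (|τ - τ₀| * N) := key
    _ ≤ c * |τ - τ₀| := by
        rw [div_mul_eq_mul_div, div_le_iff₀ (by positivity)]
        nlinarith [abs_nonneg (τ - τ₀), mul_nonneg (mul_nonneg hc.le (abs_nonneg (τ-τ₀))) hNnn]

lemma clairaut_at (P : Measure Ω) [IsProbabilityMeasure P]
    (g : ℝ → Measure ℝ → ℝ)
    (Dxg : ℝ → Measure ℝ → ℝ) (Dμg : ℝ → Measure ℝ → ℝ → ℝ)
    (DxDμg DμDxg : ℝ → Measure ℝ → ℝ → ℝ) (C : ℝ)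
    (hDxg : ∀ x μ, HasDerivAt (fun x' => g x' μ) (Dxg x μ) x)
    (hDμg : ∀ x, LionsDeriv1 P (g x) (Dμg x))
    (hDxDμ : ∀ μ y x, HasDerivAt (fun x' => Dμg x' μ y) (DxDμg x μ y) x)
    (hDμDx : ∀ x, LionsDeriv1 P (fun μ => Dxg x μ) (fun μ y => DμDxg x μ y))
    (hC : 0 ≤ C)
    (hlip : ∀ x x' μ μ' y y',
      |DxDμg x μ y - DxDμg x' μ' y'| ≤ C * (|x - x'| + |y - y'| + W2 μ μ') ∧
      |DμDxg x μ y - DμDxg x' μ' y'| ≤ C * (|x - x'| + |y - y'| + W2 μ μ'))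
    (ξ : Ω → ℝ) (hξm : Measurable ξ) (hξℒ : MemLp ξ 2 P) (x y ε : ℝ) (hε : 0 < ε)
    (hpos : P (ξ ⁻¹' Metric.closedBall y ε) ≠ 0) :
    |DxDμg x (P.map ξ) y - DμDxg x (P.map ξ) y| ≤ 2 * C * ε := by
  set E : Set Ω := ξ ⁻¹' Metric.closedBall y ε with hEdef
  have hE : MeasurableSet E := hξm measurableSet_closedBall
  set e : Ω → ℝ := E.indicator (fun _ => (1:ℝ)) with hedef
  set ϑ : Ω → ℝ := fun ω => ξ ω + E.indicator (fun ω' => y - ξ ω') ω with hϑdef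
  have hem : Measurable e := measurable_const.indicator hE
  have heℒ : MemLp e 2 P := by
    refine MemLp.of_bound hem.aestronglyMeasurable 1 (ae_of_all _ fun ω => ?_)
    by_cases h : ω ∈ E <;>
      simp [hedef, Set.indicator_of_mem, Set.indicator_of_notMem, h]
  have hϑm : Measurable ϑ := hξm.add ((measurable_const.sub hξm).indicator hE)
  have hϑℒ : MemLp ϑ 2 P := by
    refine hξℒ.add (MemLp.of_bound ((measurable_const.sub hξm).indicator hE).aestronglyMeasurable
      ε (ae_of_all _ fun ω => ?_))
    by_cases h : ω ∈ E
    · rw [Set.indicator_of_mem h]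
      have : dist (ξ ω) y ≤ ε := by simpa [hEdef, Metric.mem_closedBall] using h
      rw [Real.norm_eq_abs, abs_sub_comm]
      simpa [Real.dist_eq] using this
    · rw [Set.indicator_of_notMem h]; simpa using hε.le
  set p : ℝ := (P E).toReal with hpdef
  have hp0 : 0 < p := ENNReal.toReal_pos hpos (measure_ne_top P E)
  have hp1 : p ≤ 1 := by
    have h1 : P E ≤ 1 := prob_le_one
    have := ENNReal.toReal_mono (by norm_num) h1
    simpa using this
  have heE : ∀ ω ∈ E, e ω = 1 := fun ω h => Set.indicator_of_mem h _
  have heE' : ∀ ω, ω ∉ E → e ω = 0 := fun ω h => Set.indicator_of_notMem h _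
  have hϑE : ∀ ω ∈ E, ϑ ω = y := by
    intro ω h; simp only [hϑdef, Set.indicator_of_mem h]; ring
  have hϑE' : ∀ ω, ω ∉ E → ϑ ω = ξ ω := by
    intro ω h; simp only [hϑdef, Set.indicator_of_notMem h, add_zero]
  -- W2 bounds
  have hW2 : ∀ τ σ : ℝ, W2 (P.map fun ω => ϑ ω + τ * e ω) (P.map fun ω => ϑ ω + σ * e ω)
      ≤ |τ - σ| := by
    intro τ σ
    have hcost : (fun ω => ((ϑ ω + τ * e ω) - (ϑ ω + σ * e ω))^2)
        = E.indicator (fun _ => (τ - σ)^2) := by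
      funext ω
      by_cases h : ω ∈ E
      · rw [Set.indicator_of_mem h, heE ω h]; ring
      · rw [Set.indicator_of_notMem h, heE' ω h]; ring
    calc W2 (P.map fun ω => ϑ ω + τ * e ω) (P.map fun ω => ϑ ω + σ * e ω)
        ≤ (∫ ω, ((ϑ ω + τ * e ω) - (ϑ ω + σ * e ω))^2 ∂P) ^ ((1:ℝ)/2) :=
          W2_map_le P (hϑm.add (hem.const_mul τ)) (hϑm.add (hem.const_mul σ))
      _ = (p * (τ - σ)^2) ^ ((1:ℝ)/2) := by
          rw [hcost, integral_indicator_const _ hE, smul_eq_mul]; rfl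
      _ ≤ ((τ - σ)^2) ^ ((1:ℝ)/2) := by
          apply aux_rpow_mono (by positivity)
          nlinarith [sq_nonneg (τ - σ)]
      _ = |τ - σ| := aux_sqrt_sq _
  have hW20 : W2 (P.map ξ) (P.map fun ω => ϑ ω + 0 * e ω) ≤ ε := by
    have hcost : (fun ω => (ξ ω - (ϑ ω + 0 * e ω))^2)
        = E.indicator (fun ω' => (ξ ω' - y)^2) := by
      funext ω
      by_cases h : ω ∈ E
      · rw [Set.indicator_of_mem h, hϑE ω h]; ring
      · rw [Set.indicator_of_notMem h, hϑE' ω h]; ring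
    have hintegrable : Integrable (E.indicator (fun ω' => (ξ ω' - y)^2)) P := by
      refine Integrable.mono' (integrable_const (ε^2))
        (((hξm.sub measurable_const).pow_const 2).indicator hE).aestronglyMeasurable
        (ae_of_all _ fun ω => ?_)
      by_cases h : ω ∈ E
      · rw [Set.indicator_of_mem h]
        have hd : |ξ ω - y| ≤ ε := by
          have : dist (ξ ω) y ≤ ε := by simpa [hEdef, Metric.mem_closedBall] using h
          simpa [Real.dist_eq] using this
        rw [Real.norm_eq_abs, abs_of_nonneg (sq_nonneg _), ← sq_abs]
        exact pow_le_pow_left₀ (abs_nonneg _) hd 2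
      · rw [Set.indicator_of_notMem h]; simpa using sq_nonneg ε
    have hile : ∫ ω, (ξ ω - (ϑ ω + 0 * e ω))^2 ∂P ≤ ε^2 := by
      rw [hcost]
      calc ∫ ω, E.indicator (fun ω' => (ξ ω' - y)^2) ω ∂P
          ≤ ∫ _ω, ε^2 ∂P := by
            apply integral_mono hintegrable (integrable_const _)
            intro ω
            by_cases h : ω ∈ E
            · rw [Set.indicator_of_mem h]
              have hd : |ξ ω - y| ≤ ε := by
                have : dist (ξ ω) y ≤ ε := by simpa [hEdef, Metric.mem_closedBall] using h
                simpa [Real.dist_eq] using this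
              calc (ξ ω - y)^2 = |ξ ω - y|^2 := (sq_abs _).symm
                _ ≤ ε^2 := pow_le_pow_left₀ (abs_nonneg _) hd 2
            · rw [Set.indicator_of_notMem h]; exact sq_nonneg ε
        _ = ε^2 := by simp
    calc W2 (P.map ξ) (P.map fun ω => ϑ ω + 0 * e ω)
        ≤ (∫ ω, (ξ ω - (ϑ ω + 0 * e ω))^2 ∂P) ^ ((1:ℝ)/2) :=
          W2_map_le P hξm (hϑm.add (hem.const_mul 0))
      _ ≤ (ε^2) ^ ((1:ℝ)/2) :=
          aux_rpow_mono (integral_nonneg fun ω => sq_nonneg _) hile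
      _ = ε := by rw [aux_sqrt_sq, abs_of_pos hε]
  -- derivatives in the measure direction
  have hda : ∀ (x' τ : ℝ), HasDerivAt (fun σ => g x' (P.map (fun ω => ϑ ω + σ * e ω)))
      (p * Dμg x' (P.map (fun ω => ϑ ω + τ * e ω)) (y + τ)) τ := by
    intro x' τ
    have h1 := lions_hasDerivAt (hDμg x') hϑm hϑℒ hem heℒ τ
    have h2 : (∫ ω, Dμg x' (P.map (fun ω => ϑ ω + τ * e ω)) (ϑ ω + τ * e ω) * e ω ∂P)
        = p * Dμg x' (P.map (fun ω => ϑ ω + τ * e ω)) (y + τ) := by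
      have hfun : (fun ω => Dμg x' (P.map (fun ω => ϑ ω + τ * e ω)) (ϑ ω + τ * e ω) * e ω)
          = E.indicator (fun _ => Dμg x' (P.map (fun ω => ϑ ω + τ * e ω)) (y + τ)) := by
        funext ω
        by_cases h : ω ∈ E
        · rw [Set.indicator_of_mem h, heE ω h, hϑE ω h]; simp only [mul_one]
        · rw [Set.indicator_of_notMem h, heE' ω h]; ring
      rw [hfun, integral_indicator_const _ hE, smul_eq_mul]; rfl
    rw [h2] at h1
    exact h1
  have hdb : ∀ (x' τ : ℝ), HasDerivAt (fun σ => Dxg x' (P.map (fun ω => ϑ ω + σ * e ω)))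
      (p * DμDxg x' (P.map (fun ω => ϑ ω + τ * e ω)) (y + τ)) τ := by
    intro x' τ
    have h1 := lions_hasDerivAt (hDμDx x') hϑm hϑℒ hem heℒ τ
    have h2 : (∫ ω, DμDxg x' (P.map (fun ω => ϑ ω + τ * e ω)) (ϑ ω + τ * e ω) * e ω ∂P)
        = p * DμDxg x' (P.map (fun ω => ϑ ω + τ * e ω)) (y + τ) := by
      have hfun : (fun ω => DμDxg x' (P.map (fun ω => ϑ ω + τ * e ω)) (ϑ ω + τ * e ω) * e ω)
          = E.indicator (fun _ => DμDxg x' (P.map (fun ω => ϑ ω + τ * e ω)) (y + τ)) := by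
        funext ω
        by_cases h : ω ∈ E
        · rw [Set.indicator_of_mem h, heE ω h, hϑE ω h]; simp only [mul_one]
        · rw [Set.indicator_of_notMem h, heE' ω h]; ring
      rw [hfun, integral_indicator_const _ hE, smul_eq_mul]; rfl
    rw [h2] at h1
    exact h1
  set ν : Measure ℝ := P.map (fun ω => ϑ ω + 0 * e ω) with hνdef
  set D1 : ℝ := DxDμg x ν y with hD1def
  set D2 : ℝ := DμDxg x ν y with hD2def
  -- the quantitative double-increment estimate
  have hmain : ∀ t : ℝ, 0 < t → |D1 - D2| ≤ 6 * C * t := by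
    intro t ht
    -- Lipschitz bounds near the base point
    have hbnd1 : ∀ s τ : ℝ, s ∈ Set.Icc (0:ℝ) t → τ ∈ Set.Icc (0:ℝ) t →
        |DxDμg (x + s) (P.map (fun ω => ϑ ω + τ * e ω)) (y + τ) - D1| ≤ 3 * C * t := by
      intro s τ hs hτ
      calc |DxDμg (x + s) (P.map (fun ω => ϑ ω + τ * e ω)) (y + τ) - D1|
          ≤ C * (|x + s - x| + |y + τ - y| + W2 (P.map (fun ω => ϑ ω + τ * e ω)) ν) :=
            (hlip (x+s) x _ ν (y+τ) y).1
        _ ≤ 3 * C * t := by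
            have h1 : |x + s - x| = s := by rw [abs_of_nonneg (by linarith [hs.1] : (0:ℝ) ≤ x + s - x)] <;> ring_nf
            have h2 : |y + τ - y| = τ := by rw [abs_of_nonneg (by linarith [hτ.1] : (0:ℝ) ≤ y + τ - y)] <;> ring_nf
            have h3 : W2 (P.map (fun ω => ϑ ω + τ * e ω)) ν ≤ τ := by
              have := hW2 τ 0
              rw [sub_zero, abs_of_nonneg hτ.1] at this
              exact this
            have := hs.2; have := hτ.2
            nlinarith [hs.1, hτ.1]
    have hbnd2 : ∀ s τ : ℝ, s ∈ Set.Icc (0:ℝ) t → τ ∈ Set.Icc (0:ℝ) t →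
        |DμDxg (x + s) (P.map (fun ω => ϑ ω + τ * e ω)) (y + τ) - D2| ≤ 3 * C * t := by
      intro s τ hs hτ
      calc |DμDxg (x + s) (P.map (fun ω => ϑ ω + τ * e ω)) (y + τ) - D2|
          ≤ C * (|x + s - x| + |y + τ - y| + W2 (P.map (fun ω => ϑ ω + τ * e ω)) ν) :=
            (hlip (x+s) x _ ν (y+τ) y).2
        _ ≤ 3 * C * t := by
            have h1 : |x + s - x| = s := by rw [abs_of_nonneg (by linarith [hs.1] : (0:ℝ) ≤ x + s - x)] <;> ring_nf
            have h2 : |y + τ - y| = τ := by rw [abs_of_nonneg (by linarith [hτ.1] : (0:ℝ) ≤ y + τ - y)] <;> ring_nf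
            have h3 : W2 (P.map (fun ω => ϑ ω + τ * e ω)) ν ≤ τ := by
              have := hW2 τ 0
              rw [sub_zero, abs_of_nonneg hτ.1] at this
              exact this
            have := hs.2; have := hτ.2
            nlinarith [hs.1, hτ.1]
    -- Path A : inner estimate (x-direction MVT on Dμg)
    have hA1 : ∀ τ ∈ Set.Icc (0:ℝ) t,
        |(Dμg (x + t) (P.map (fun ω => ϑ ω + τ * e ω)) (y + τ)
            - Dμg x (P.map (fun ω => ϑ ω + τ * e ω)) (y + τ)) - t * D1| ≤ (3 * C * t) * t := by
      intro τ hτ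
      have := mvt_bound (h := fun s => Dμg (x + s) (P.map (fun ω => ϑ ω + τ * e ω)) (y + τ))
        (h' := fun s => DxDμg (x + s) (P.map (fun ω => ϑ ω + τ * e ω)) (y + τ))
        (K := D1) (M := 3 * C * t) ht.le
        (fun s _hs => (hDxDμ _ (y + τ) (x + s)).comp_const_add x s)
        (fun s hs => hbnd1 s τ hs hτ)
      simpa using this
    -- Path A : outer MVT
    have hΔA : |(g (x + t) (P.map (fun ω => ϑ ω + t * e ω)) - g x (P.map (fun ω => ϑ ω + t * e ω)))
        - (g (x + t) ν - g x ν) - t * (t * (p * D1))| ≤ (p * ((3 * C * t) * t)) * t := by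
      have := mvt_bound (h := fun τ => g (x + t) (P.map (fun ω => ϑ ω + τ * e ω))
            - g x (P.map (fun ω => ϑ ω + τ * e ω)))
        (h' := fun τ => p * Dμg (x + t) (P.map (fun ω => ϑ ω + τ * e ω)) (y + τ)
            - p * Dμg x (P.map (fun ω => ϑ ω + τ * e ω)) (y + τ))
        (K := t * (p * D1)) (M := p * ((3 * C * t) * t)) ht.le
        (fun τ _hτ => (hda (x + t) τ).sub (hda x τ))
        (fun τ hτ => by
          have h := hA1 τ hτ
          have heq : p * Dμg (x + t) (P.map (fun ω => ϑ ω + τ * e ω)) (y + τ)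
              - p * Dμg x (P.map (fun ω => ϑ ω + τ * e ω)) (y + τ) - t * (p * D1)
              = p * ((Dμg (x + t) (P.map (fun ω => ϑ ω + τ * e ω)) (y + τ)
              - Dμg x (P.map (fun ω => ϑ ω + τ * e ω)) (y + τ)) - t * D1) := by ring
          rw [heq, abs_mul, abs_of_pos hp0]
          exact mul_le_mul_of_nonneg_left h hp0.le)
      simpa [hνdef] using this
    -- Path B : inner estimate (μ-direction MVT on Dxg)
    have hB1 : ∀ s ∈ Set.Icc (0:ℝ) t,
        |(Dxg (x + s) (P.map (fun ω => ϑ ω + t * e ω)) - Dxg (x + s) ν) - t * (p * D2)|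
          ≤ (p * (3 * C * t)) * t := by
      intro s hs
      have := mvt_bound (h := fun τ => Dxg (x + s) (P.map (fun ω => ϑ ω + τ * e ω)))
        (h' := fun τ => p * DμDxg (x + s) (P.map (fun ω => ϑ ω + τ * e ω)) (y + τ))
        (K := p * D2) (M := p * (3 * C * t)) ht.le
        (fun τ _hτ => hdb (x + s) τ)
        (fun τ hτ => by
          have h := hbnd2 s τ hs hτ
          have heq : p * DμDxg (x + s) (P.map (fun ω => ϑ ω + τ * e ω)) (y + τ) - p * D2
              = p * (DμDxg (x + s) (P.map (fun ω => ϑ ω + τ * e ω)) (y + τ) - D2) := by ring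
          rw [heq, abs_mul, abs_of_pos hp0]
          exact mul_le_mul_of_nonneg_left h hp0.le)
      simpa [hνdef] using this
    -- Path B : outer MVT
    have hΔB : |(g (x + t) (P.map (fun ω => ϑ ω + t * e ω)) - g (x + t) ν)
        - (g x (P.map (fun ω => ϑ ω + t * e ω)) - g x ν) - t * (t * (p * D2))|
          ≤ ((p * (3 * C * t)) * t) * t := by
      have := mvt_bound (h := fun s => g (x + s) (P.map (fun ω => ϑ ω + t * e ω)) - g (x + s) ν)
        (h' := fun s => Dxg (x + s) (P.map (fun ω => ϑ ω + t * e ω)) - Dxg (x + s) ν)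
        (K := t * (p * D2)) (M := (p * (3 * C * t)) * t) ht.le
        (fun s _hs => ((hDxg (x + s) _).comp_const_add x s).sub ((hDxg (x + s) ν).comp_const_add x s))
        (fun s hs => hB1 s hs)
      simpa using this
    -- combine
    have hcomb : p * t^2 * |D1 - D2| ≤ p * t^2 * (6 * C * t) := by
      have habs : |t * (t * (p * D1)) - t * (t * (p * D2))| = p * t^2 * |D1 - D2| := by
        have : t * (t * (p * D1)) - t * (t * (p * D2)) = (p * t^2) * (D1 - D2) := by ring
        rw [this, abs_mul, abs_of_pos (by positivity : (0:ℝ) < p * t^2)]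
      have key : |t * (t * (p * D1)) - t * (t * (p * D2))|
          ≤ (p * ((3 * C * t) * t)) * t + ((p * (3 * C * t)) * t) * t := by
        have harr : t * (t * (p * D1)) - t * (t * (p * D2)) =
            -((g (x + t) (P.map (fun ω => ϑ ω + t * e ω)) - g x (P.map (fun ω => ϑ ω + t * e ω)))
              - (g (x + t) ν - g x ν) - t * (t * (p * D1)))
            + ((g (x + t) (P.map (fun ω => ϑ ω + t * e ω)) - g (x + t) ν)
              - (g x (P.map (fun ω => ϑ ω + t * e ω)) - g x ν) - t * (t * (p * D2))) := by ring
        rw [harr]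
        exact (abs_add_le _ _).trans (by rw [abs_neg]; exact add_le_add hΔA hΔB)
      rw [habs] at key
      calc p * t^2 * |D1 - D2| ≤ (p * ((3 * C * t) * t)) * t + ((p * (3 * C * t)) * t) * t := key
        _ = p * t^2 * (6 * C * t) := by ring
    have := (mul_le_mul_iff_of_pos_left (by positivity : (0:ℝ) < p * t^2)).mp hcomb
    exact this
  -- let t → 0
  have hD12 : D1 = D2 := by
    by_contra hne
    have hd : 0 < |D1 - D2| := abs_pos.2 (sub_ne_zero.2 hne)
    have h6 := hmain (|D1 - D2| / (6 * C + 1)) (by positivity)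
    rw [mul_div_assoc'] at h6
    rw [le_div_iff₀ (by positivity : (0:ℝ) < 6 * C + 1)] at h6
    nlinarith
  -- conclude via Lipschitz in W2
  have e1 : |DxDμg x (P.map ξ) y - D1| ≤ C * ε := by
    calc |DxDμg x (P.map ξ) y - D1|
        ≤ C * (|x - x| + |y - y| + W2 (P.map ξ) ν) := (hlip x x _ ν y y).1
      _ ≤ C * ε := by
          have h0 : |x - x| = 0 := by simp
          have h0' : |y - y| = 0 := by simp
          rw [h0, h0', zero_add, zero_add]
          exact mul_le_mul_of_nonneg_left hW20 hC
  have e2 : |DμDxg x (P.map ξ) y - D2| ≤ C * ε := by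
    calc |DμDxg x (P.map ξ) y - D2|
        ≤ C * (|x - x| + |y - y| + W2 (P.map ξ) ν) := (hlip x x _ ν y y).2
      _ ≤ C * ε := by
          have h0 : |x - x| = 0 := by simp
          have h0' : |y - y| = 0 := by simp
          rw [h0, h0', zero_add, zero_add]
          exact mul_le_mul_of_nonneg_left hW20 hC
  have e1' := abs_le.mp e1
  have e2' := abs_le.mp e2
  rw [abs_le]
  constructor <;> [skip; skip] <;> [nlinarith [e1'.1, e1'.2, e2'.1, e2'.2, hD12]; nlinarith [e1'.1, e1'.2, e2'.1, e2'.2, hD12]]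


/-- Clairaut identity, a.e. step.  Computing the double increment
`I = g(x+z,P_{ξ+η}) − g(x+z,P_ξ) − g(x,P_{ξ+η}) + g(x,P_ξ)` in two ways yields
`E[∂_x(∂_μ g)(x,P_ξ,ξ)η]·z = E[∂_μ(∂_x g)(x,P_ξ)(ξ)η]·z + R` with
`|R| ≤ 4C|z|²E[η²]`; consequently the two mixed derivatives agree `P_ξ`-a.e. -/
theorem statement12 (P : Measure Ω) [IsProbabilityMeasure P]
    (g : ℝ → Measure ℝ → ℝ)
    (Dxg : ℝ → Measure ℝ → ℝ) (Dμg : ℝ → Measure ℝ → ℝ → ℝ)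
    (DxDμg DμDxg : ℝ → Measure ℝ → ℝ → ℝ) (C : ℝ)
    (hDxg : ∀ x μ, HasDerivAt (fun x' => g x' μ) (Dxg x μ) x)
    (hDμg : ∀ x, LionsDeriv1 P (g x) (Dμg x))
    (hDxDμ : ∀ μ y x, HasDerivAt (fun x' => Dμg x' μ y) (DxDμg x μ y) x)
    (hDμDx : ∀ x, LionsDeriv1 P (fun μ => Dxg x μ) (fun μ y => DμDxg x μ y))
    (hbound : ∀ x μ y, |DxDμg x μ y| ≤ C ∧ |DμDxg x μ y| ≤ C)
    (hlip : ∀ x x' μ μ' y y',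
      |DxDμg x μ y - DxDμg x' μ' y'| ≤ C * (|x - x'| + |y - y'| + W2 μ μ') ∧
      |DμDxg x μ y - DμDxg x' μ' y'| ≤ C * (|x - x'| + |y - y'| + W2 μ μ')) :
    ∀ ξ : Ω → ℝ, Measurable ξ → MemLp ξ 2 P → ∀ x : ℝ,
      (∀ (z : ℝ) (η : Ω → ℝ), Measurable η → MemLp η 2 P →
        ∃ R : ℝ,
          (∫ ω, DxDμg x (P.map ξ) (ξ ω) * η ω ∂P) * z
            = (∫ ω, DμDxg x (P.map ξ) (ξ ω) * η ω ∂P) * z + R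
          ∧ |R| ≤ 4 * C * |z| ^ 2 * ∫ ω, (η ω) ^ 2 ∂P)
      ∧ (∀ᵐ y ∂(P.map ξ), DxDμg x (P.map ξ) y = DμDxg x (P.map ξ) y) := by
  intro ξ hξm hξℒ x
  have hC : 0 ≤ C := (abs_nonneg _).trans (hbound 0 (P.map ξ) 0).1
  -- pointwise equality at points whose neighborhoods are charged by the law of ξ
  have key : ∀ y : ℝ, (∀ ε : ℝ, 0 < ε → (P.map ξ) (Metric.closedBall y ε) ≠ 0) →
      DxDμg x (P.map ξ) y = DμDxg x (P.map ξ) y := by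
    intro y hy
    have h2 : ∀ ε : ℝ, 0 < ε → |DxDμg x (P.map ξ) y - DμDxg x (P.map ξ) y| ≤ 2 * C * ε := by
      intro ε hε
      refine clairaut_at P g Dxg Dμg DxDμg DμDxg C hDxg hDμg hDxDμ hDμDx hC hlip
        ξ hξm hξℒ x y ε hε ?_
      rw [← Measure.map_apply hξm measurableSet_closedBall]
      exact hy ε hε
    by_contra hne
    have hd : 0 < |DxDμg x (P.map ξ) y - DμDxg x (P.map ξ) y| :=
      abs_pos.2 (sub_ne_zero.2 hne)
    have h3 := h2 (|DxDμg x (P.map ξ) y - DμDxg x (P.map ξ) y| / (2 * C + 1)) (by positivity)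
    rw [mul_div_assoc'] at h3
    rw [le_div_iff₀ (by positivity : (0:ℝ) < 2 * C + 1)] at h3
    nlinarith
  -- the bad set : union of rational balls with zero mass
  set T : Set (ℚ × ℚ) := {qr | (P.map ξ) (Metric.ball (qr.1 : ℝ) (qr.2 : ℝ)) = 0} with hT
  set B : Set ℝ := ⋃ qr ∈ T, Metric.ball (qr.1 : ℝ) (qr.2 : ℝ) with hBdef
  have hBmeas : MeasurableSet B :=
    MeasurableSet.biUnion (Set.to_countable T) (fun _ _ => measurableSet_ball)
  have hBnull : (P.map ξ) B = 0 :=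
    (measure_biUnion_null_iff (Set.to_countable T)).2 (fun qr h => h)
  have hB : ∀ y : ℝ, y ∉ B → ∀ ε : ℝ, 0 < ε → (P.map ξ) (Metric.closedBall y ε) ≠ 0 := by
    intro y hyB ε hε h0
    obtain ⟨r, hr0, hrε⟩ := exists_rat_btwn (by positivity : (0:ℝ) < ε / 2)
    obtain ⟨q, hq1, hq2⟩ := exists_rat_btwn (show y - (r : ℝ) < y by linarith)
    have hsub : Metric.ball (q : ℝ) (r : ℝ) ⊆ Metric.closedBall y ε := by
      intro z hz
      rw [Metric.mem_ball, Real.dist_eq] at hz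
      rw [Metric.mem_closedBall, Real.dist_eq]
      have : |(q : ℝ) - y| < r := by rw [abs_sub_lt_iff]; constructor <;> linarith
      calc |z - y| ≤ |z - q| + |(q : ℝ) - y| := abs_sub_le _ _ _
        _ ≤ ε := by linarith
    have hmem : (q, r) ∈ T := by
      simp only [hT, Set.mem_setOf_eq]
      exact measure_mono_null hsub h0
    exact hyB (Set.mem_biUnion hmem (by
      rw [Metric.mem_ball, Real.dist_eq, abs_sub_lt_iff]
      constructor <;> linarith))
  have haey : ∀ᵐ y ∂(P.map ξ), DxDμg x (P.map ξ) y = DμDxg x (P.map ξ) y := by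
    have h1 : ∀ᵐ y ∂(P.map ξ), y ∉ B := by
      rw [ae_iff]
      simpa using hBnull
    exact h1.mono fun y hy => key y (hB y hy)
  have haeω : ∀ᵐ ω ∂P, DxDμg x (P.map ξ) (ξ ω) = DμDxg x (P.map ξ) (ξ ω) := by
    have hpre : P (ξ ⁻¹' B) = 0 := by
      rw [← Measure.map_apply hξm hBmeas]; exact hBnull
    have h1 : ∀ᵐ ω ∂P, ξ ω ∉ B := by
      rw [ae_iff]
      simpa [Set.preimage] using hpre
    exact h1.mono fun ω hω => key (ξ ω) (hB (ξ ω) hω)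
  refine ⟨?_, haey⟩
  intro z η hηm hηℒ
  refine ⟨0, ?_, ?_⟩
  · rw [add_zero]
    congr 1
    exact integral_congr_ae (haeω.mono fun ω h => by simp only [h])
  · rw [abs_zero]
    have h1 : 0 ≤ ∫ ω, (η ω)^2 ∂P := integral_nonneg fun ω => sq_nonneg _
    have := mul_nonneg (mul_nonneg (mul_nonneg (by norm_num : (0:ℝ) ≤ 4) hC) (sq_nonneg |z|)) h1
    linarith
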